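/- For all integers n and k with 2 ≤ k < n, the sets C_{n,k} and L_{n,k} have the same cardinality: |C_{n,k}| = |L_{n,k}|. -/

import Mathlib

open Finset

/-- The word of a permutation `σ` of `Fin n`: the letter at (0-based) position `i`,
viewed as a natural number (the letters are `0, 1, ..., n-1`, identified with the usual
letters `1, ..., n`); junk value `0` outside the range. -/
def entry {n : ℕ} (σ : Equiv.Perm (Fin n)) (i : ℕ) : ℕ :=
  if h : i < n then (σ ⟨i, h⟩ : ℕ) else 0

/-- Position `i` starts a run of the word `w`: either `i = 0`, or there is a
descent at position `i - 1`. -/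
def WordRunStart (w : ℕ → ℕ) (i : ℕ) : Prop :=
  i = 0 ∨ w i < w (i - 1)

instance (w : ℕ → ℕ) (i : ℕ) : Decidable (WordRunStart w i) :=
  inferInstanceAs (Decidable (i = 0 ∨ w i < w (i - 1)))

/-- The number of runs of the length-`m` word `w` (maximal consecutive increasing subwords). -/
def wordRuns (w : ℕ → ℕ) (m : ℕ) : ℕ :=
  ((Finset.range m).filter fun i => WordRunStart w i).card

/-- The length-`m` word `w` is flattened: the first entries of its runs,
read from left to right, increase. -/
def WordFlattened (w : ℕ → ℕ) (m : ℕ) : Prop :=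
  ∀ i < m, ∀ j < m, WordRunStart w i → WordRunStart w j → i < j → w i < w j

instance (w : ℕ → ℕ) (m : ℕ) : Decidable (WordFlattened w m) :=
  inferInstanceAs (Decidable (∀ i < m, ∀ j < m,
    WordRunStart w i → WordRunStart w j → i < j → w i < w j))

/-- Position `i` (0-based) starts a run of the permutation `σ`. -/
def IsRunStart {n : ℕ} (σ : Equiv.Perm (Fin n)) (i : ℕ) : Prop :=
  i < n ∧ WordRunStart (entry σ) i

instance {n : ℕ} (σ : Equiv.Perm (Fin n)) (i : ℕ) : Decidable (IsRunStart σ i) :=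
  inferInstanceAs (Decidable (i < n ∧ WordRunStart (entry σ) i))

/-- The number of runs of the permutation `σ`. -/
def runCount {n : ℕ} (σ : Equiv.Perm (Fin n)) : ℕ :=
  wordRuns (entry σ) n

/-- `σ` is a flattened partition. -/
def IsFlattened {n : ℕ} (σ : Equiv.Perm (Fin n)) : Prop :=
  WordFlattened (entry σ) n

instance {n : ℕ} (σ : Equiv.Perm (Fin n)) : Decidable (IsFlattened σ) :=
  inferInstanceAs (Decidable (WordFlattened (entry σ) n))

/-- `flatSet n k`: the set `F_{n,k}` of flattened partitions over `[n]` with exactly `k` runs. -/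
def flatSet (n k : ℕ) : Finset (Equiv.Perm (Fin n)) :=
  Finset.univ.filter fun σ => IsFlattened σ ∧ runCount σ = k

/-- `f n k = |F_{n,k}|`, the number of flattened partitions over `[n]` with exactly `k` runs. -/
def f (n k : ℕ) : ℕ := (flatSet n k).card

/-- `Cset n k`: the set `C_{n,k}` of flattened partitions over `[n]` with exactly `k` runs
whose first run consists of exactly two elements (position `1` is not a run start, but
position `2` is), i.e. those of the form `1 X 2 ⋯` with `X ∈ {3, …, n}`. -/
def Cset (n k : ℕ) : Finset (Equiv.Perm (Fin n)) :=
  (flatSet n k).filter fun σ => ¬ IsRunStart σ 1 ∧ IsRunStart σ 2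

/-- The (0-based) position of the largest letter of `σ`. -/
def delPos {n : ℕ} (σ : Equiv.Perm (Fin n)) : ℕ :=
  if h : 0 < n then (σ.symm ⟨n - 1, Nat.sub_lt h Nat.one_pos⟩ : ℕ) else 0

/-- The word on `[n-1]` obtained from `σ` by deleting its largest letter `n`. -/
def delWord {n : ℕ} (σ : Equiv.Perm (Fin n)) (i : ℕ) : ℕ :=
  if i < delPos σ then entry σ i else entry σ (i + 1)

/-- The number of runs of the word obtained from `σ` by deleting its largest letter `n`. -/
def delRuns {n : ℕ} (σ : Equiv.Perm (Fin n)) : ℕ :=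
  wordRuns (delWord σ) (n - 1)

/-- `Kset n k`: the set `K_{n,k}` of flattened partitions over `[n]` with exactly `k` runs
such that deleting the letter `n` leaves the number of runs unchanged. -/
def Kset (n k : ℕ) : Finset (Equiv.Perm (Fin n)) :=
  (flatSet n k).filter fun σ => delRuns σ = k

/-- `Lset n k`: the set `L_{n,k}` of flattened partitions over `[n]` with exactly `k` runs
such that deleting the letter `n` reduces the number of runs by one. -/
def Lset (n k : ℕ) : Finset (Equiv.Perm (Fin n)) :=
  (flatSet n k).filter fun σ => delRuns σ = k - 1


/-! ### Infrastructure -/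

section Helpers

variable {n : ℕ}

lemma entry_lt (σ : Equiv.Perm (Fin n)) {i : ℕ} (h : i < n) : entry σ i < n := by
  simp [entry, h]

lemma entry_inj (σ : Equiv.Perm (Fin n)) {i j : ℕ} (hi : i < n) (hj : j < n)
    (h : entry σ i = entry σ j) : i = j := by
  simp only [entry, hi, hj, dif_pos] at h
  have := σ.injective (Fin.ext h)
  exact congrArg Fin.val this

lemma perm_ext {σ τ : Equiv.Perm (Fin n)} (h : ∀ i < n, entry σ i = entry τ i) : σ = τ := by
  apply Equiv.ext
  intro i
  have := h i i.2
  simp only [entry, i.2, dif_pos] at this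
  exact Fin.ext (by simpa using this)

lemma delPos_lt (hn : 0 < n) (σ : Equiv.Perm (Fin n)) : delPos σ < n := by
  simp only [delPos, hn, dif_pos]
  exact (σ.symm _).2

lemma entry_delPos (hn : 0 < n) (σ : Equiv.Perm (Fin n)) : entry σ (delPos σ) = n - 1 := by
  simp only [delPos, entry, hn, dif_pos, (σ.symm _).2]
  simp

/-- Build a permutation of `Fin n` from a word. -/
noncomputable def mkPerm (n : ℕ) (u : ℕ → ℕ) (h : ∀ i < n, u i < n)
    (hinj : ∀ i < n, ∀ j < n, u i = u j → i = j) : Equiv.Perm (Fin n) :=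
  Equiv.ofBijective (fun i : Fin n => (⟨u i, h i i.2⟩ : Fin n))
    ((Finite.injective_iff_bijective).1 (fun i j hij => by
      exact Fin.ext (hinj i i.2 j j.2 (by simpa using hij))))

lemma entry_mkPerm (n : ℕ) (u : ℕ → ℕ) (h : ∀ i < n, u i < n)
    (hinj : ∀ i < n, ∀ j < n, u i = u j → i = j) {i : ℕ} (hi : i < n) :
    entry (mkPerm n u h hinj) i = u i := by
  simp only [entry, hi, dif_pos]
  rfl

lemma entry_zero (σ : Equiv.Perm (Fin n)) (hF : IsFlattened σ) (hn : 0 < n) :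
    entry σ 0 = 0 := by
  by_contra h0
  set q : ℕ := (σ.symm ⟨0, hn⟩ : ℕ) with hq
  have hqn : q < n := (σ.symm _).2
  have hqv : entry σ q = 0 := by
    simp only [entry, hqn, dif_pos, hq]
    simp
  have hqne : q ≠ 0 := fun h => h0 (h ▸ hqv)
  have h1 : q - 1 < n := by omega
  have hne : entry σ (q - 1) ≠ 0 := by
    intro he
    have := entry_inj σ h1 hqn (he.trans hqv.symm)
    omega
  have hstart : WordRunStart (entry σ) q := by
    right
    omega
  have := hF 0 hn q hqn (Or.inl rfl) hstart (by omega)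
  omega

lemma entry_pos (σ : Equiv.Perm (Fin n)) (hF : IsFlattened σ) (hn : 0 < n) {i : ℕ}
    (h1 : 1 ≤ i) (h2 : i < n) : 1 ≤ entry σ i := by
  rcases Nat.eq_zero_or_pos (entry σ i) with h | h
  · exfalso
    have := entry_inj σ h2 hn (h.trans (entry_zero σ hF hn).symm)
    omega
  · exact h

/-- Count of run starts in a half-open interval. -/
def cnt (u : ℕ → ℕ) (a b : ℕ) : ℕ :=
  ((Finset.Ico a b).filter fun i => WordRunStart u i).card

lemma wordRuns_eq_cnt (u : ℕ → ℕ) (m : ℕ) : wordRuns u m = cnt u 0 m := by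
  unfold wordRuns cnt
  rw [Finset.range_eq_Ico]

lemma cnt_split (u : ℕ → ℕ) {a b c : ℕ} (h1 : a ≤ b) (h2 : b ≤ c) :
    cnt u a c = cnt u a b + cnt u b c := by
  rw [cnt, ← Finset.Ico_union_Ico_eq_Ico h1 h2, Finset.filter_union,
    Finset.card_union_of_disjoint]
  · rfl
  · exact Finset.disjoint_filter_filter (Finset.Ico_disjoint_Ico_consecutive a b c)

lemma cnt_singleton (u : ℕ → ℕ) (a : ℕ) :
    cnt u a (a + 1) = if WordRunStart u a then 1 else 0 := by
  rw [cnt, Nat.Ico_succ_singleton, Finset.filter_singleton]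
  split <;> simp

lemma cnt_congr {u v : ℕ → ℕ} {a b : ℕ}
    (h : ∀ i, a ≤ i → i < b → (WordRunStart u i ↔ WordRunStart v i)) :
    cnt u a b = cnt v a b := by
  unfold cnt
  congr 1
  apply Finset.filter_congr
  intro i hi
  rw [Finset.mem_Ico] at hi
  simp only [h i hi.1 hi.2]

lemma cnt_shift {u v : ℕ → ℕ} {a b d : ℕ}
    (h : ∀ i, a ≤ i → i < b → (WordRunStart u i ↔ WordRunStart v (i + d))) :
    cnt u a b = cnt v (a + d) (b + d) := by
  unfold cnt
  apply Finset.card_bij (fun i _ => i + d)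
  · intro i hi
    simp only [Finset.mem_filter, Finset.mem_Ico] at hi ⊢
    exact ⟨⟨by omega, by omega⟩, (h i hi.1.1 hi.1.2).1 hi.2⟩
  · intro i hi j hj hij
    omega
  · intro j hj
    simp only [Finset.mem_filter, Finset.mem_Ico] at hj
    refine ⟨j - d, ?_, by omega⟩
    simp only [Finset.mem_filter, Finset.mem_Ico]
    have hjd : j - d + d = j := by omega
    exact ⟨⟨by omega, by omega⟩, (h (j - d) (by omega) (by omega)).2 (by rw [hjd]; exact hj.2)⟩

lemma wordRunStart_zero (u : ℕ → ℕ) : WordRunStart u 0 := Or.inl rfl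

end Helpers

section Del

variable {n : ℕ}

lemma del_count (σ : Equiv.Perm (Fin n)) (hn : 3 ≤ n) (hp1 : 1 ≤ delPos σ)
    (hp2 : delPos σ + 2 ≤ n) :
    wordRuns (delWord σ) (n - 1) + 1 =
      wordRuns (entry σ) n +
        (if entry σ (delPos σ + 1) < entry σ (delPos σ - 1) then 1 else 0) := by
  set p := delPos σ with hp
  have hpv : entry σ p = n - 1 := entry_delPos (by omega) σ
  have h1 : cnt (delWord σ) 0 p = cnt (entry σ) 0 p := by
    apply cnt_congr
    intro i _ hip
    rcases Nat.eq_zero_or_pos i with h0 | h0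
    · subst h0; simp [WordRunStart]
    · unfold WordRunStart delWord
      rw [if_pos hip, if_pos (show i - 1 < p by omega)]
  have h2 : cnt (delWord σ) p (p + 1) = if entry σ (p + 1) < entry σ (p - 1) then 1 else 0 := by
    rw [cnt_singleton]
    have hiff : WordRunStart (delWord σ) p ↔ entry σ (p + 1) < entry σ (p - 1) := by
      unfold WordRunStart delWord
      rw [if_neg (show ¬ p < p by omega), if_pos (show p - 1 < p by omega)]
      constructor
      · rintro (h | h)
        · omega
        · exact h
      · exact Or.inr
    simp only [hiff]
  have h3 : cnt (delWord σ) (p + 1) (n - 1) = cnt (entry σ) (p + 2) n := by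
    have := cnt_shift (u := delWord σ) (v := entry σ) (a := p + 1) (b := n - 1) (d := 1)
      (by
        intro i hi1 hi2
        unfold WordRunStart delWord
        rw [if_neg (show ¬ i < p by omega), if_neg (show ¬ i - 1 < p by omega)]
        have e1 : i - 1 + 1 = i := by omega
        rw [e1]
        constructor
        · rintro (h | h)
          · omega
          · exact Or.inr h
        · rintro (h | h)
          · omega
          · exact Or.inr h)
    rw [this]
    congr 1
    omega
  have h4 : cnt (entry σ) p (p + 1) = 0 := by
    rw [cnt_singleton, if_neg]
    unfold WordRunStart
    have := entry_lt σ (show p - 1 < n by omega)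
    rw [hpv]
    push_neg
    exact ⟨by omega, by omega⟩
  have h5 : cnt (entry σ) (p + 1) (p + 2) = 1 := by
    rw [cnt_singleton, if_pos]
    right
    have hlt := entry_lt σ (show p + 1 < n by omega)
    have hne : entry σ (p + 1) ≠ n - 1 := by
      intro h
      have := entry_inj σ (show p + 1 < n by omega) (show p < n by omega) (h.trans hpv.symm)
      omega
    have e1 : p + 1 - 1 = p := by omega
    rw [e1, hpv]
    omega
  have hL : wordRuns (delWord σ) (n - 1) =
      cnt (delWord σ) 0 p + cnt (delWord σ) p (p + 1) + cnt (delWord σ) (p + 1) (n - 1) := by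
    rw [wordRuns_eq_cnt, cnt_split (u := delWord σ) (show (0:ℕ) ≤ p by omega)
      (show p ≤ n - 1 by omega), cnt_split (u := delWord σ) (show p ≤ p + 1 by omega)
      (show p + 1 ≤ n - 1 by omega)]
    omega
  have hR : wordRuns (entry σ) n =
      cnt (entry σ) 0 p + cnt (entry σ) p (p + 1) + cnt (entry σ) (p + 1) (p + 2)
        + cnt (entry σ) (p + 2) n := by
    rw [wordRuns_eq_cnt, cnt_split (u := entry σ) (show (0:ℕ) ≤ p by omega)
      (show p ≤ n by omega), cnt_split (u := entry σ) (show p ≤ p + 1 by omega)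
      (show p + 1 ≤ n by omega), cnt_split (u := entry σ) (show p + 1 ≤ p + 2 by omega)
      (show p + 2 ≤ n by omega)]
    omega
  rw [hL, hR, h1, h2, h3, h4, h5]
  omega

lemma del_count_last (σ : Equiv.Perm (Fin n)) (hn : 2 ≤ n) (hp : delPos σ = n - 1) :
    wordRuns (delWord σ) (n - 1) = wordRuns (entry σ) n := by
  have hpv : entry σ (n - 1) = n - 1 := hp ▸ entry_delPos (by omega) σ
  have h1 : cnt (delWord σ) 0 (n - 1) = cnt (entry σ) 0 (n - 1) := by
    apply cnt_congr
    intro i _ hi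
    rcases Nat.eq_zero_or_pos i with h0 | h0
    · subst h0; simp [WordRunStart]
    · unfold WordRunStart delWord
      rw [hp, if_pos hi, if_pos (show i - 1 < n - 1 by omega)]
  have h2 : cnt (entry σ) (n - 1) n = 0 := by
    have e1 : cnt (entry σ) (n - 1) n = cnt (entry σ) (n - 1) ((n - 1) + 1) := by
      congr 1
      omega
    rw [e1, cnt_singleton, if_neg]
    unfold WordRunStart
    have hlt := entry_lt σ (show n - 1 - 1 < n by omega)
    have hne : entry σ (n - 1 - 1) ≠ n - 1 := by
      intro h
      have := entry_inj σ (show n - 1 - 1 < n by omega) (show n - 1 < n by omega)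
        (h.trans hpv.symm)
      omega
    rw [hpv]
    push_neg
    exact ⟨by omega, by omega⟩
  rw [wordRuns_eq_cnt, wordRuns_eq_cnt, h1,
    cnt_split (u := entry σ) (show (0:ℕ) ≤ n - 1 by omega) (show n - 1 ≤ n by omega), h2]
  omega

lemma L_mem_facts {k : ℕ} (hk : 2 ≤ k) (hkn : k < n) {σ : Equiv.Perm (Fin n)}
    (hσ : σ ∈ Lset n k) :
    IsFlattened σ ∧ wordRuns (entry σ) n = k ∧ 1 ≤ delPos σ ∧ delPos σ + 2 ≤ n ∧
      entry σ (delPos σ - 1) < entry σ (delPos σ + 1) := by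
  have hn : 3 ≤ n := by omega
  simp only [Lset, flatSet, Finset.mem_filter, Finset.mem_univ, true_and] at hσ
  obtain ⟨⟨hF, hkc⟩, hdel⟩ := hσ
  set p := delPos σ with hp
  have hpn : p < n := delPos_lt (by omega) σ
  have hpv : entry σ p = n - 1 := entry_delPos (by omega) σ
  have hp1 : 1 ≤ p := by
    rcases Nat.eq_zero_or_pos p with h0 | h0
    · have := entry_zero σ hF (by omega)
      rw [h0] at hpv
      omega
    · exact h0
  have hp2 : p + 2 ≤ n := by
    by_contra hcon
    have hplast : p = n - 1 := by omega
    have := del_count_last σ (by omega) hplast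
    unfold delRuns at hdel
    unfold runCount at hkc
    omega
  have hmain := del_count σ hn hp1 hp2
  unfold delRuns at hdel
  unfold runCount at hkc
  have hind : ¬ entry σ (p + 1) < entry σ (p - 1) := by
    intro h
    rw [if_pos h] at hmain
    omega
  have hne : entry σ (p - 1) ≠ entry σ (p + 1) := by
    intro h
    have := entry_inj σ (show p - 1 < n by omega) (show p + 1 < n by omega) h
    omega
  exact ⟨hF, hkc, hp1, hp2, by omega⟩

end Del

section Psi

variable {n : ℕ}

/-- The word of `Ψ σ`. -/
def psiW (σ : Equiv.Perm (Fin n)) : ℕ → ℕ := fun i =>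
  if i = 0 then 0
  else if i = 1 then entry σ (delPos σ + 1) + 1
  else if i ≤ delPos σ + 1 then entry σ (i - 2) + 1
  else entry σ i + 1

/-- The position of `σ` that the letter at position `i` of `Ψ σ` comes from. -/
def psiPos (p i : ℕ) : ℕ :=
  if i = 1 then p + 1 else if i ≤ p + 1 then i - 2 else i

lemma psiW_zero (σ : Equiv.Perm (Fin n)) : psiW σ 0 = 0 := by simp [psiW]

lemma psiW_pos_form (σ : Equiv.Perm (Fin n)) {i : ℕ} (h1 : 1 ≤ i) :
    psiW σ i = entry σ (psiPos (delPos σ) i) + 1 := by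
  unfold psiW psiPos
  rw [if_neg (by omega)]
  by_cases h : i = 1
  · rw [if_pos h, if_pos h]
  · rw [if_neg h, if_neg h]
    by_cases h2 : i ≤ delPos σ + 1
    · rw [if_pos h2, if_pos h2]
    · rw [if_neg h2, if_neg h2]

lemma psiPos_lt_ne {p i : ℕ} (hp1 : 1 ≤ p) (hp2 : p + 2 ≤ n) (h1 : 1 ≤ i) (h2 : i < n) :
    psiPos p i < n ∧ psiPos p i ≠ p := by
  unfold psiPos
  split_ifs <;> omega

lemma psiPos_inj {p i j : ℕ} (hp1 : 1 ≤ p) (h1 : 1 ≤ i) (h1' : 1 ≤ j)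
    (h : psiPos p i = psiPos p j) : i = j := by
  unfold psiPos at h
  split_ifs at h <;> omega

lemma entry_lt_max (σ : Equiv.Perm (Fin n)) (hn : 0 < n) {j : ℕ} (hj : j < n)
    (hne : j ≠ delPos σ) : entry σ j < n - 1 := by
  have h1 := entry_lt σ hj
  have h2 : entry σ j ≠ n - 1 := by
    intro h
    exact hne (entry_inj σ hj (delPos_lt hn σ) (h.trans (entry_delPos hn σ).symm))
  omega

variable (σ : Equiv.Perm (Fin n))

lemma psiW_lt (hp1 : 1 ≤ delPos σ) (hp2 : delPos σ + 2 ≤ n) :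
    ∀ i < n, psiW σ i < n := by
  intro i hi
  rcases Nat.eq_zero_or_pos i with h0 | h0
  · rw [h0, psiW_zero]; omega
  · rw [psiW_pos_form σ h0]
    obtain ⟨ha, hb⟩ := psiPos_lt_ne hp1 hp2 h0 hi
    have := entry_lt_max σ (by omega) ha hb
    omega

lemma psiW_inj (hp1 : 1 ≤ delPos σ) (hp2 : delPos σ + 2 ≤ n) :
    ∀ i < n, ∀ j < n, psiW σ i = psiW σ j → i = j := by
  intro i hi j hj h
  rcases Nat.eq_zero_or_pos i with h0 | h0 <;> rcases Nat.eq_zero_or_pos j with h0' | h0'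
  · omega
  · rw [h0, psiW_zero, psiW_pos_form σ h0'] at h; omega
  · rw [h0', psiW_zero, psiW_pos_form σ h0] at h; omega
  · rw [psiW_pos_form σ h0, psiW_pos_form σ h0'] at h
    have hi' := (psiPos_lt_ne hp1 hp2 h0 hi).1
    have hj' := (psiPos_lt_ne hp1 hp2 h0' hj).1
    exact psiPos_inj hp1 h0 h0' (entry_inj σ hi' hj' (by omega))

variable {σ}
variable (hF : IsFlattened σ) (hp1 : 1 ≤ delPos σ) (hp2 : delPos σ + 2 ≤ n)

include hp1 hp2

include hF in
lemma b_pos : 1 ≤ entry σ (delPos σ + 1) :=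
  entry_pos σ hF (by omega) (by omega) (by omega)

lemma start_p1 : WordRunStart (entry σ) (delPos σ + 1) := by
  right
  have e1 : delPos σ + 1 - 1 = delPos σ := by omega
  rw [e1, entry_delPos (by omega) σ]
  exact entry_lt_max σ (by omega) (by omega) (by omega)

include hF in
lemma b_lt_after (hpp : delPos σ + 2 < n) :
    entry σ (delPos σ + 1) < entry σ (delPos σ + 2) := by
  have hne : entry σ (delPos σ + 1) ≠ entry σ (delPos σ + 2) := by
    intro h
    have := entry_inj σ (by omega) (by omega) h
    omega
  by_contra hcon
  have hstart : WordRunStart (entry σ) (delPos σ + 2) := by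
    right
    have e1 : delPos σ + 2 - 1 = delPos σ + 1 := by omega
    rw [e1]
    omega
  have := hF (delPos σ + 1) (by omega) (delPos σ + 2) (by omega)
    (start_p1 hp1 hp2) hstart (by omega)
  omega

include hF in
lemma psi_not_start1 : ¬ WordRunStart (psiW σ) 1 := by
  unfold WordRunStart
  push_neg
  refine ⟨by omega, ?_⟩
  rw [psiW_zero]
  omega

include hF in
lemma psi_start2 : WordRunStart (psiW σ) 2 := by
  right
  have e1 : psiW σ 2 = entry σ 0 + 1 := by
    unfold psiW
    rw [if_neg (by omega), if_neg (by omega), if_pos (by omega)]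
  have e2 : psiW σ 1 = entry σ (delPos σ + 1) + 1 := by
    unfold psiW
    rw [if_neg (by omega), if_pos rfl]
  have e3 : (2 : ℕ) - 1 = 1 := rfl
  rw [e3, e1, e2, entry_zero σ hF (by omega)]
  have := b_pos hF hp1 hp2
  omega

lemma psi_start_mid {i : ℕ} (h3 : 3 ≤ i) (hip : i ≤ delPos σ + 1) :
    WordRunStart (psiW σ) i ↔ WordRunStart (entry σ) (i - 2) := by
  have e1 : psiW σ i = entry σ (i - 2) + 1 := by
    unfold psiW
    rw [if_neg (by omega), if_neg (by omega), if_pos hip]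
  have e2 : psiW σ (i - 1) = entry σ (i - 3) + 1 := by
    have h' : i - 1 - 2 = i - 3 := by omega
    unfold psiW
    rw [if_neg (by omega), if_neg (by omega), if_pos (by omega), h']
  unfold WordRunStart
  have e3 : i - 2 - 1 = i - 3 := by omega
  rw [e1, e2, e3]
  constructor
  · rintro (h | h)
    · omega
    · exact Or.inr (by omega)
  · rintro (h | h)
    · omega
    · exact Or.inr (by omega)

include hF in
lemma psi_start_tail (hP3 : entry σ (delPos σ - 1) < entry σ (delPos σ + 1)) {i : ℕ}
    (hpi : delPos σ + 2 ≤ i) (hi : i < n) :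
    WordRunStart (psiW σ) i ↔ WordRunStart (entry σ) i := by
  rcases eq_or_lt_of_le hpi with he | hlt
  · -- i = p + 2 : both sides false
    have hba := b_lt_after hF hp1 hp2 (by omega)
    have e1 : psiW σ i = entry σ (delPos σ + 2) + 1 := by
      unfold psiW
      rw [if_neg (by omega), if_neg (by omega), if_neg (by omega), ← he]
    have e2 : psiW σ (i - 1) = entry σ (delPos σ - 1) + 1 := by
      have h' : i - 1 - 2 = delPos σ - 1 := by omega
      unfold psiW
      rw [if_neg (by omega), if_neg (by omega), if_pos (by omega), h']
    unfold WordRunStart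
    rw [e1, e2, ← he]
    have e3 : delPos σ + 2 - 1 = delPos σ + 1 := by omega
    rw [e3]
    constructor
    · rintro (h | h) <;> omega
    · rintro (h | h) <;> omega
  · have e1 : psiW σ i = entry σ i + 1 := by
      unfold psiW
      rw [if_neg (by omega), if_neg (by omega), if_neg (by omega)]
    have e2 : psiW σ (i - 1) = entry σ (i - 1) + 1 := by
      unfold psiW
      rw [if_neg (by omega), if_neg (by omega), if_neg (by omega)]
    unfold WordRunStart
    rw [e1, e2]
    constructor
    · rintro (h | h) <;> [omega; exact Or.inr (by omega)]
    · rintro (h | h) <;> [omega; exact Or.inr (by omega)]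

include hF in
lemma psi_start_cases (hP3 : entry σ (delPos σ - 1) < entry σ (delPos σ + 1)) {i : ℕ}
    (hi : i < n) (hs : WordRunStart (psiW σ) i) :
    i = 0 ∨ i = 2 ∨ (3 ≤ i ∧ i ≤ delPos σ + 1 ∧ WordRunStart (entry σ) (i - 2)) ∨
      (delPos σ + 2 ≤ i ∧ WordRunStart (entry σ) i) := by
  rcases Nat.lt_or_ge i 3 with h3 | h3
  · interval_cases i
    · exact Or.inl rfl
    · exact absurd hs (psi_not_start1 hF hp1 hp2)
    · exact Or.inr (Or.inl rfl)
  · rcases le_or_gt i (delPos σ + 1) with hip | hip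
    · exact Or.inr (Or.inr (Or.inl ⟨h3, hip, (psi_start_mid hp1 hp2 h3 hip).1 hs⟩))
    · exact Or.inr (Or.inr (Or.inr ⟨by omega,
        (psi_start_tail hF hp1 hp2 hP3 (by omega) hi).1 hs⟩))

include hF in
lemma psi_flattened (hP3 : entry σ (delPos σ - 1) < entry σ (delPos σ + 1)) :
    WordFlattened (psiW σ) n := by
  have hmid_val : ∀ i, 2 ≤ i → i ≤ delPos σ + 1 → psiW σ i = entry σ (i - 2) + 1 := by
    intro i h2 hip
    unfold psiW
    rw [if_neg (by omega), if_neg (by omega), if_pos hip]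
  have h2_val : psiW σ 2 = 1 := by
    rw [hmid_val 2 (by omega) (by omega), show (2:ℕ) - 2 = 0 by rfl,
      entry_zero σ hF (by omega)]
  have htail_val : ∀ i, delPos σ + 2 ≤ i → psiW σ i = entry σ i + 1 := by
    intro i h2
    unfold psiW
    rw [if_neg (by omega), if_neg (by omega), if_neg (by omega)]
  intro i hi j hj hsi hsj hij
  rcases psi_start_cases hF hp1 hp2 hP3 hi hsi with h0 | h2 | ⟨h3, hip, hmi⟩ | ⟨hti, hsi'⟩ <;>
    rcases psi_start_cases hF hp1 hp2 hP3 hj hsj with g0 | g2 | ⟨g3, gjp, gmj⟩ | ⟨gtj, gsj'⟩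
  -- i = 0 cases : psiW σ i = 0 < psiW σ j
  · omega
  · rw [h0, psiW_zero, hmid_val j (by omega) (by omega)]; omega
  · rw [h0, psiW_zero, hmid_val j (by omega) gjp]; omega
  · rw [h0, psiW_zero, htail_val j gtj]; omega
  -- i = 2 cases
  · omega
  · omega
  · rw [h2, h2_val, hmid_val j (by omega) gjp]
    have := entry_pos σ hF (by omega) (show 1 ≤ j - 2 by omega) (by omega)
    omega
  · rw [h2, h2_val, htail_val j gtj]
    have := entry_pos σ hF (by omega) (show 1 ≤ j by omega) (by omega)
    omega
  -- mid cases
  · omega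
  · omega
  · rw [hmid_val i (by omega) hip, hmid_val j (by omega) gjp]
    have := hF (i - 2) (by omega) (j - 2) (by omega) hmi gmj (by omega)
    omega
  · rw [hmid_val i (by omega) hip, htail_val j gtj]
    have := hF (i - 2) (by omega) j hj hmi gsj' (by omega)
    omega
  -- tail cases
  · omega
  · omega
  · omega
  · rw [htail_val i hti, htail_val j gtj]
    have := hF i hi j hj hsi' gsj' hij
    omega

include hF in
lemma psi_runs (hP3 : entry σ (delPos σ - 1) < entry σ (delPos σ + 1)) :
    cnt (psiW σ) 0 n = cnt (entry σ) 0 n := by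
  set p := delPos σ with hp
  have c01 : cnt (psiW σ) 0 1 = 1 := by
    rw [cnt_singleton, if_pos (wordRunStart_zero _)]
  have c12 : cnt (psiW σ) 1 2 = 0 := by
    rw [cnt_singleton, if_neg (psi_not_start1 hF hp1 hp2)]
  have c23 : cnt (psiW σ) 2 3 = 1 := by
    rw [cnt_singleton, if_pos (psi_start2 hF hp1 hp2)]
  have cmid : cnt (entry σ) 1 p = cnt (psiW σ) 3 (p + 2) := by
    have := cnt_shift (u := entry σ) (v := psiW σ) (a := 1) (b := p) (d := 2)
      (by
        intro i hi1 hi2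
        have h := psi_start_mid (σ := σ) hp1 hp2 (i := i + 2) (by omega) (by omega)
        rw [show i + 2 - 2 = i by omega] at h
        exact h.symm)
    rw [this]
  have ctail : cnt (psiW σ) (p + 2) n = cnt (entry σ) (p + 2) n := by
    apply cnt_congr
    intro i hi1 hi2
    exact psi_start_tail hF hp1 hp2 hP3 hi1 hi2
  have e01 : cnt (entry σ) 0 1 = 1 := by
    rw [cnt_singleton, if_pos (wordRunStart_zero _)]
  have ep : cnt (entry σ) p (p + 1) = 0 := by
    rw [cnt_singleton, if_neg]
    unfold WordRunStart
    have := entry_lt σ (show p - 1 < n by omega)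
    rw [entry_delPos (by omega) σ]
    push_neg
    exact ⟨by omega, by omega⟩
  have ep1 : cnt (entry σ) (p + 1) (p + 2) = 1 := by
    rw [cnt_singleton, if_pos (start_p1 hp1 hp2)]
  have hLsplit : cnt (psiW σ) 0 n =
      cnt (psiW σ) 0 1 + cnt (psiW σ) 1 2 + cnt (psiW σ) 2 3 + cnt (psiW σ) 3 (p + 2)
        + cnt (psiW σ) (p + 2) n := by
    rw [cnt_split (u := psiW σ) (show (0:ℕ) ≤ 1 by omega) (show 1 ≤ n by omega),
      cnt_split (u := psiW σ) (show (1:ℕ) ≤ 2 by omega) (show 2 ≤ n by omega),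
      cnt_split (u := psiW σ) (show (2:ℕ) ≤ 3 by omega) (show 3 ≤ n by omega),
      cnt_split (u := psiW σ) (show (3:ℕ) ≤ p + 2 by omega) (show p + 2 ≤ n by omega)]
    omega
  have hRsplit : cnt (entry σ) 0 n =
      cnt (entry σ) 0 1 + cnt (entry σ) 1 p + cnt (entry σ) p (p + 1)
        + cnt (entry σ) (p + 1) (p + 2) + cnt (entry σ) (p + 2) n := by
    rw [cnt_split (u := entry σ) (show (0:ℕ) ≤ 1 by omega) (show 1 ≤ n by omega),
      cnt_split (u := entry σ) (show (1:ℕ) ≤ p by omega) (show p ≤ n by omega),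
      cnt_split (u := entry σ) (show p ≤ p + 1 by omega) (show p + 1 ≤ n by omega),
      cnt_split (u := entry σ) (show p + 1 ≤ p + 2 by omega) (show p + 2 ≤ n by omega)]
    omega
  omega

end Psi

section Inj

variable {n k : ℕ}

lemma psiW_one {n : ℕ} (σ : Equiv.Perm (Fin n)) :
    psiW σ 1 = entry σ (delPos σ + 1) + 1 := by
  unfold psiW
  rw [if_neg (by omega), if_pos rfl]

lemma psiW_mid_val {n : ℕ} (σ : Equiv.Perm (Fin n)) {i : ℕ} (h2 : 2 ≤ i)
    (hip : i ≤ delPos σ + 1) : psiW σ i = entry σ (i - 2) + 1 := by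
  unfold psiW
  rw [if_neg (by omega), if_neg (by omega), if_pos hip]

lemma psiW_tail_val {n : ℕ} (σ : Equiv.Perm (Fin n)) {i : ℕ} (h : delPos σ + 2 ≤ i) :
    psiW σ i = entry σ i + 1 := by
  unfold psiW
  rw [if_neg (by omega), if_neg (by omega), if_neg (by omega)]

lemma psi_inj_aux {σ1 σ2 : Equiv.Perm (Fin n)}
    (hF1 : IsFlattened σ1)
    (hq1 : 1 ≤ delPos σ1) (hq2 : delPos σ1 + 2 ≤ n)
    (hr1 : 1 ≤ delPos σ2) (hr2 : delPos σ2 + 2 ≤ n)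
    (hP3' : entry σ2 (delPos σ2 - 1) < entry σ2 (delPos σ2 + 1))
    (hw : ∀ i < n, psiW σ1 i = psiW σ2 i)
    (hlt : delPos σ1 < delPos σ2) : False := by
  set p1 := delPos σ1 with hp1d
  set p2 := delPos σ2 with hp2d
  have hb : entry σ2 (p2 + 1) = entry σ1 (p1 + 1) := by
    have h1 := hw 1 (by omega)
    rw [psiW_one, psiW_one, ← hp1d, ← hp2d] at h1
    omega
  set b := entry σ1 (p1 + 1) with hbd
  have hchain : ∀ j, p1 + 2 ≤ j → j ≤ p2 + 1 → b < entry σ1 j := by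
    intro j hj1
    induction j, hj1 using Nat.le_induction with
    | base =>
        intro _
        exact b_lt_after hF1 hq1 hq2 (by omega)
    | succ j hj ih =>
        intro hj2
        have hprev : b < entry σ1 j := ih (by omega)
        by_cases hdesc : entry σ1 (j + 1) < entry σ1 j
        · have hstart : WordRunStart (entry σ1) (j + 1) := by
            right
            rw [show j + 1 - 1 = j by omega]
            exact hdesc
          have := hF1 (p1 + 1) (by omega) (j + 1) (by omega)
            (start_p1 hq1 hq2) hstart (by omega)
          omega
        · omega
  have hfin : b < entry σ1 (p2 + 1) := hchain (p2 + 1) (by omega) (by omega)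
  have heq : entry σ1 (p2 + 1) = entry σ2 (p2 - 1) := by
    have h1 := hw (p2 + 1) (by omega)
    rw [psiW_tail_val σ1 (by omega), psiW_mid_val σ2 (by omega) (by omega)] at h1
    rw [show p2 + 1 - 2 = p2 - 1 by omega] at h1
    omega
  omega

lemma psi_word_eq_of_delPos_eq {σ1 σ2 : Equiv.Perm (Fin n)}
    (hq1 : 1 ≤ delPos σ1) (hq2 : delPos σ1 + 2 ≤ n)
    (hw : ∀ i < n, psiW σ1 i = psiW σ2 i)
    (hpe : delPos σ1 = delPos σ2) : σ1 = σ2 := by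
  set p := delPos σ1 with hpd
  apply perm_ext
  intro i hi
  rcases lt_trichotomy i p with hip | hip | hip
  · have h1 := hw (i + 2) (by omega)
    rw [psiW_mid_val σ1 (by omega) (by omega),
      psiW_mid_val σ2 (by omega) (by omega), show i + 2 - 2 = i by omega] at h1
    omega
  · rw [hip, entry_delPos (by omega) σ1, hpe, entry_delPos (by omega) σ2]
  · rcases Nat.eq_or_lt_of_le (show p + 1 ≤ i by omega) with he | hlt'
    · have h1 := hw 1 (by omega)
      rw [psiW_one, psiW_one, ← hpe, ← hpd] at h1
      rw [← he]
      omega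
    · have h1 := hw i (by omega)
      rw [psiW_tail_val σ1 (by omega), psiW_tail_val σ2 (by omega)] at h1
      omega

end Inj

section Surj

variable {n k : ℕ}

lemma wordRunStart_iff_of_eq {u v : ℕ → ℕ} {m i : ℕ} (h : ∀ j < m, u j = v j)
    (hi : i < m) : WordRunStart u i ↔ WordRunStart v i := by
  unfold WordRunStart
  rw [h i hi, h (i - 1) (by omega)]

lemma cnt_of_eq {u v : ℕ → ℕ} {m a b : ℕ} (h : ∀ j < m, u j = v j) (hb : b ≤ m) :
    cnt u a b = cnt v a b :=
  cnt_congr fun i _ hib => wordRunStart_iff_of_eq h (by omega)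

lemma wordFlattened_of_eq {u v : ℕ → ℕ} {m : ℕ} (h : ∀ j < m, u j = v j)
    (hf : WordFlattened u m) : WordFlattened v m := by
  intro i hi j hj hsi hsj hij
  rw [← h i hi, ← h j hj]
  exact hf i hi j hj ((wordRunStart_iff_of_eq h hi).2 hsi)
    ((wordRunStart_iff_of_eq h hj).2 hsj) hij

lemma C_mem_facts (hk : 2 ≤ k) (hkn : k < n) {τ : Equiv.Perm (Fin n)}
    (hτ : τ ∈ Cset n k) :
    IsFlattened τ ∧ wordRuns (entry τ) n = k ∧ ¬ WordRunStart (entry τ) 1 ∧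
      WordRunStart (entry τ) 2 ∧ entry τ 2 = 1 ∧ 2 ≤ entry τ 1 := by
  have hn : 3 ≤ n := by omega
  simp only [Cset, flatSet, Finset.mem_filter, Finset.mem_univ, true_and] at hτ
  simp only [IsRunStart] at hτ
  obtain ⟨⟨hF, hkc⟩, hns1, hs2⟩ := hτ
  have hns1' : ¬ WordRunStart (entry τ) 1 := fun h => hns1 ⟨by omega, h⟩
  have hs2' : WordRunStart (entry τ) 2 := hs2.2
  have e0 : entry τ 0 = 0 := entry_zero τ hF (by omega)
  have e2v : entry τ 2 = 1 := by
    set q : ℕ := (τ.symm ⟨1, by omega⟩ : ℕ) with hq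
    have hqn : q < n := (τ.symm _).2
    have hqv : entry τ q = 1 := by
      simp only [entry, hqn, dif_pos, hq]
      simp
    rcases Nat.lt_trichotomy q 2 with h2 | h2 | h2
    · exfalso
      interval_cases q
      · omega
      · -- entry τ 1 = 1; start at 2 means entry τ 2 < 1 so entry τ 2 = 0 = entry τ 0
        rcases hs2' with h | h
        · omega
        · have : entry τ (2 - 1) = 1 := hqv
          have h20 : entry τ 2 = 0 := by omega
          have := entry_inj τ (show 2 < n by omega) (show 0 < n by omega)
            (h20.trans e0.symm)
          omega
    · rw [h2] at hqv; exact hqv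
    · exfalso
      have hstartq : WordRunStart (entry τ) q := by
        right
        have hq1n : q - 1 < n := by omega
        have hne0 : entry τ (q - 1) ≠ 0 := by
          intro h
          have := entry_inj τ hq1n (show 0 < n by omega) (h.trans e0.symm)
          omega
        have hne1 : entry τ (q - 1) ≠ 1 := by
          intro h
          have := entry_inj τ hq1n hqn (h.trans hqv.symm)
          omega
        omega
      have := hF 2 (by omega) q hqn hs2' hstartq h2
      have h20 : entry τ 2 = 0 := by omega
      have := entry_inj τ (show 2 < n by omega) (show 0 < n by omega) (h20.trans e0.symm)
      omega
  have hb : 2 ≤ entry τ 1 := by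
    rcases hs2' with h | h
    · omega
    · have : entry τ (2 - 1) = entry τ 1 := rfl
      omega
  exact ⟨hF, hkc, hns1', hs2', e2v, hb⟩

end Surj

section Surj2

variable {n k : ℕ}

lemma surj_aux (hk : 2 ≤ k) (hkn : k < n) {τ : Equiv.Perm (Fin n)} (hτ : τ ∈ Cset n k) :
    ∃ σ, ∃ _ : σ ∈ Lset n k, ∀ i < n, psiW σ i = entry τ i := by
  have hn : 3 ≤ n := by omega
  obtain ⟨hF, hkc, hns1, hs2, e2v, hb2⟩ := C_mem_facts hk hkn hτ
  have e0 : entry τ 0 = 0 := entry_zero τ hF (by omega)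
  set b := entry τ 1 - 1 with hbdef
  have hbmax : b ≤ n - 2 := by
    have := entry_lt τ (show 1 < n by omega)
    omega
  have hb1 : 1 ≤ b := by omega
  set w : ℕ → ℕ := fun i => entry τ (i + 2) - 1 with hwdef
  have epos : ∀ i, 1 ≤ i → i < n → 1 ≤ entry τ i := fun i h1 h2 => entry_pos τ hF (by omega) h1 h2
  have hw_add : ∀ i, i < n - 2 → w i + 1 = entry τ (i + 2) := by
    intro i hi
    have := epos (i + 2) (by omega) (by omega)
    simp only [hwdef]
    omega
  have w0 : w 0 = 0 := by
    simp only [hwdef]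
    norm_num [e2v]
  have wle : ∀ i, i < n - 2 → w i ≤ n - 2 := by
    intro i hi
    have h1 := entry_lt τ (show i + 2 < n by omega)
    simp only [hwdef]
    omega
  have wneb : ∀ i, i < n - 2 → w i ≠ b := by
    intro i hi h
    have h1 := hw_add i hi
    have h2 : entry τ (i + 2) = entry τ 1 := by omega
    have := entry_inj τ (show i + 2 < n by omega) (show 1 < n by omega) h2
    omega
  have winj : ∀ i, i < n - 2 → ∀ j, j < n - 2 → w i = w j → i = j := by
    intro i hi j hj h
    have h1 := hw_add i hi
    have h2 := hw_add j hj
    have := entry_inj τ (show i + 2 < n by omega) (show j + 2 < n by omega)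
      (show entry τ (i + 2) = entry τ (j + 2) by omega)
    omega
  have wstart0 : WordRunStart w 0 := Or.inl rfl
  have wstart_iff : ∀ i, 1 ≤ i → i < n - 2 →
      (WordRunStart w i ↔ WordRunStart (entry τ) (i + 2)) := by
    intro i h1 hi
    have ha := hw_add i hi
    have hb' := hw_add (i - 1) (by omega)
    rw [show i - 1 + 2 = i + 2 - 1 by omega] at hb'
    unfold WordRunStart
    constructor
    · rintro (h | h)
      · omega
      · right; omega
    · rintro (h | h)
      · omega
      · right; omega
  have wflat : ∀ i, i < n - 2 → ∀ j, j < n - 2 → WordRunStart w i → WordRunStart w j →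
      i < j → w i < w j := by
    intro i hi j hj hsi hsj hij
    rcases Nat.eq_zero_or_pos i with h0 | h0
    · subst h0
      rw [w0]
      have : w j ≠ 0 := by
        intro h
        have := winj j hj 0 (by omega) (h.trans w0.symm)
        omega
      omega
    · have := hF (i + 2) (by omega) (j + 2) (by omega)
        ((wstart_iff i h0 hi).1 hsi) ((wstart_iff j (by omega) hj).1 hsj) (by omega)
      have ha := hw_add i hi
      have hb' := hw_add j hj
      omega
  have wruns : cnt w 0 (n - 2) = k - 1 := by
    have hshift : cnt w 0 (n - 2) = cnt (entry τ) 2 n := by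
      have := cnt_shift (u := w) (v := entry τ) (a := 0) (b := n - 2) (d := 2)
        (by
          intro i hi1 hi2
          rcases Nat.eq_zero_or_pos i with h0 | h0
          · subst h0
            exact ⟨fun _ => hs2, fun _ => wstart0⟩
          · exact wstart_iff i h0 hi2)
      rw [this]
      congr 1
      omega
    have hsplit : cnt (entry τ) 0 n =
        cnt (entry τ) 0 1 + cnt (entry τ) 1 2 + cnt (entry τ) 2 n := by
      rw [cnt_split (u := entry τ) (show (0:ℕ) ≤ 1 by omega) (show 1 ≤ n by omega),
        cnt_split (u := entry τ) (show (1:ℕ) ≤ 2 by omega) (show 2 ≤ n by omega)]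
      omega
    have h01 : cnt (entry τ) 0 1 = 1 := by
      rw [cnt_singleton, if_pos (wordRunStart_zero _)]
    have h12 : cnt (entry τ) 1 2 = 0 := by
      rw [cnt_singleton, if_neg hns1]
    rw [wordRuns_eq_cnt] at hkc
    omega
  -- choice of the slot p
  have hj0pack : ∃ j0, 1 ≤ j0 ∧ j0 ≤ n - 2 ∧ (j0 = n - 2 ∨ (j0 < n - 2 ∧ b < w j0)) ∧
      (∀ j, j < j0 → j < n - 2 → WordRunStart w j → w j < b) ∧
      (∀ j, j0 ≤ j → j < n - 2 → WordRunStart w j → b < w j) := by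
    set D := (Finset.Ico 1 (n - 2)).filter (fun j => WordRunStart w j ∧ b < w j) with hDdef
    have hmemD : ∀ j, j ∈ D ↔ (1 ≤ j ∧ j < n - 2) ∧ WordRunStart w j ∧ b < w j := by
      intro j
      rw [hDdef]
      simp only [Finset.mem_filter, Finset.mem_Ico]
    by_cases hD : D.Nonempty
    · have hmm := (hmemD _).1 (D.min'_mem hD)
      refine ⟨D.min' hD, hmm.1.1, by omega, Or.inr ⟨hmm.1.2, hmm.2.2⟩, ?_, ?_⟩
      · intro j hj hjn hs
        rcases Nat.eq_zero_or_pos j with h0 | h0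
        · rw [h0, w0]; omega
        · have hnot : ¬ b < w j := by
            intro hlt
            have := D.min'_le j ((hmemD j).2 ⟨⟨h0, hjn⟩, hs, hlt⟩)
            omega
          have := wneb j hjn
          omega
      · intro j hj hjn hs
        rcases Nat.eq_or_lt_of_le hj with he | hlt
        · rw [← he]; exact hmm.2.2
        · have := wflat (D.min' hD) (by omega) j hjn hmm.2.1 hs hlt
          omega
    · refine ⟨n - 2, by omega, by omega, Or.inl rfl, ?_, by omega⟩
      intro j hj hjn hs
      rcases Nat.eq_zero_or_pos j with h0 | h0
      · rw [h0, w0]; omega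
      · have hnot : ¬ b < w j := by
          intro hlt
          exact hD ⟨j, (hmemD j).2 ⟨⟨h0, hjn⟩, hs, hlt⟩⟩
        have := wneb j hjn
        omega
  obtain ⟨j0, hj0ge1, hj0le, hj0or, hA, hDge⟩ := hj0pack
  have hjppack : ∃ jp, jp < j0 ∧ WordRunStart w jp ∧
      ∀ j, jp < j → j < j0 → ¬ WordRunStart w j := by
    set B := (Finset.range j0).filter (fun j => WordRunStart w j) with hBdef
    have hmemB : ∀ j, j ∈ B ↔ j < j0 ∧ WordRunStart w j := by
      intro j
      rw [hBdef]
      simp only [Finset.mem_filter, Finset.mem_range]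
    have hBne : B.Nonempty := ⟨0, (hmemB 0).2 ⟨by omega, wstart0⟩⟩
    have hmm := (hmemB _).1 (B.max'_mem hBne)
    refine ⟨B.max' hBne, hmm.1, hmm.2, ?_⟩
    intro j hj1 hj2 hs
    have := B.le_max' j ((hmemB j).2 ⟨hj2, hs⟩)
    omega
  obtain ⟨jp, hjplt, hjps, hnostart⟩ := hjppack
  have hppack : ∃ p, jp + 1 ≤ p ∧ p ≤ j0 ∧ (p = j0 ∨ b < w p) ∧
      (∀ q, jp + 1 ≤ q → q < p → ¬(q = j0 ∨ b < w q)) := by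
    set P := (Finset.Ico (jp + 1) (j0 + 1)).filter (fun j => j = j0 ∨ b < w j) with hPdef
    have hmemP : ∀ j, j ∈ P ↔ (jp + 1 ≤ j ∧ j ≤ j0) ∧ (j = j0 ∨ b < w j) := by
      intro j
      rw [hPdef]
      simp only [Finset.mem_filter, Finset.mem_Ico]
      omega
    have hPne : P.Nonempty := ⟨j0, (hmemP j0).2 ⟨⟨by omega, le_refl _⟩, Or.inl rfl⟩⟩
    have hmm := (hmemP _).1 (P.min'_mem hPne)
    refine ⟨P.min' hPne, hmm.1.1, hmm.1.2, hmm.2, ?_⟩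
    intro q hq1 hq2 hor
    have := P.min'_le q ((hmemP q).2 ⟨⟨hq1, by omega⟩, hor⟩)
    omega
  obtain ⟨p, hpgt, hple, hpor, hpmin⟩ := hppack
  have hp1 : 1 ≤ p := by omega
  have hp2 : p ≤ n - 2 := by omega
  have hpc3 : p < n - 2 → b < w p := by
    intro hlt
    rcases hpor with he | h
    · rcases hj0or with h' | h'
      · omega
      · rw [he]; exact h'.2
    · exact h
  have hpc2 : w (p - 1) < b := by
    rcases Nat.eq_or_lt_of_le hpgt with he | hlt
    · rw [show p - 1 = jp by omega]
      exact hA jp hjplt (by omega) hjps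
    · have h2 := hpmin (p - 1) (by omega) (by omega)
      push_neg at h2
      have := wneb (p - 1) (by omega)
      omega
  have hpc4 : ∀ j, j < p → j < n - 2 → WordRunStart w j → w j < b :=
    fun j hj hjn hs => hA j (by omega) hjn hs
  have hpc5 : ∀ j, p ≤ j → j < n - 2 → WordRunStart w j → b < w j := by
    intro j hj hjn hs
    rcases lt_or_ge j j0 with hlt | hge
    · exact absurd hs (hnostart j (by omega) hlt)
    · exact hDge j hge hjn hs
  -- the word of σ
  set φ : ℕ → ℕ := fun i =>
    if i < p then w i else if i = p then n - 1 else if i = p + 1 then b else w (i - 2)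
    with hφdef
  have φval_lt : ∀ i, i < p → φ i = w i := by
    intro i hi
    simp only [hφdef]
    split_ifs <;> first | rfl | omega
  have φval_p : φ p = n - 1 := by
    simp only [hφdef]
    split_ifs <;> first | rfl | omega
  have φval_p1 : φ (p + 1) = b := by
    simp only [hφdef]
    split_ifs <;> first | rfl | omega
  have φval_t : ∀ i, p + 2 ≤ i → φ i = w (i - 2) := by
    intro i hi
    simp only [hφdef]
    split_ifs <;> first | rfl | omega
  have φlt : ∀ i < n, φ i < n := by
    intro i hi
    rcases lt_trichotomy i p with h | h | h
    · rw [φval_lt i h]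
      have := wle i (by omega)
      omega
    · rw [h, φval_p]
      omega
    · by_cases h2 : i = p + 1
      · rw [h2, φval_p1]
        omega
      · rw [φval_t i (by omega)]
        have := wle (i - 2) (by omega)
        omega
  have φregion : ∀ a, a < n → (a < p ∧ φ a = w a) ∨ (a = p ∧ φ a = n - 1) ∨
      (a = p + 1 ∧ φ a = b) ∨ (p + 2 ≤ a ∧ φ a = w (a - 2)) := by
    intro a ha
    rcases lt_trichotomy a p with h' | h' | h'
    · exact Or.inl ⟨h', φval_lt a h'⟩
    · exact Or.inr (Or.inl ⟨h', by rw [h', φval_p]⟩)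
    · by_cases h2 : a = p + 1
      · exact Or.inr (Or.inr (Or.inl ⟨h2, by rw [h2, φval_p1]⟩))
      · exact Or.inr (Or.inr (Or.inr ⟨by omega, φval_t a (by omega)⟩))
  have φinj : ∀ i < n, ∀ j < n, φ i = φ j → i = j := by
    intro i hi j hj h
    rcases φregion i hi with ⟨hi', ei⟩ | ⟨hi', ei⟩ | ⟨hi', ei⟩ | ⟨hi', ei⟩ <;>
      rcases φregion j hj with ⟨hj', ej⟩ | ⟨hj', ej⟩ | ⟨hj', ej⟩ | ⟨hj', ej⟩ <;>
      rw [ei, ej] at h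
    · exact winj i (by omega) j (by omega) h
    · have := wle i (by omega); omega
    · exact absurd h (wneb i (by omega))
    · have := winj i (by omega) (j - 2) (by omega) h; omega
    · have := wle j (by omega); omega
    · omega
    · omega
    · have := wle (j - 2) (by omega); omega
    · exact absurd h.symm (wneb j (by omega))
    · omega
    · omega
    · exact absurd h.symm (wneb (j - 2) (by omega))
    · have := winj (i - 2) (by omega) j (by omega) h; omega
    · have := wle (i - 2) (by omega); omega
    · exact absurd h (wneb (i - 2) (by omega))
    · have := winj (i - 2) (by omega) (j - 2) (by omega) h; omega
  set σ0 := mkPerm n φ φlt φinj with hσ0def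
  have hentry : ∀ i, i < n → entry σ0 i = φ i := fun i hi => entry_mkPerm n φ φlt φinj hi
  have hdelpos : delPos σ0 = p := by
    have h1 : entry σ0 (delPos σ0) = n - 1 := entry_delPos (by omega) _
    have h2 : entry σ0 p = n - 1 := by rw [hentry p (by omega), φval_p]
    exact entry_inj _ (delPos_lt (by omega) _) (by omega) (h1.trans h2.symm)
  -- run starts of φ
  have φstart_lt : ∀ i, i < p → (WordRunStart φ i ↔ WordRunStart w i) := by
    intro i hi
    rcases Nat.eq_zero_or_pos i with h0 | h0
    · subst h0
      simp [WordRunStart]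
    · unfold WordRunStart
      rw [φval_lt i hi, φval_lt (i - 1) (by omega)]
  have φnostart_p : ¬ WordRunStart φ p := by
    unfold WordRunStart
    push_neg
    refine ⟨by omega, ?_⟩
    rw [φval_p, φval_lt (p - 1) (by omega)]
    have := wle (p - 1) (by omega)
    omega
  have φstart_p1 : WordRunStart φ (p + 1) := by
    right
    rw [show p + 1 - 1 = p by omega, φval_p1, φval_p]
    omega
  have wnostart_p : p < n - 2 → ¬ WordRunStart w p := by
    intro hlt hs
    have h1 := hpc3 hlt
    rcases hs with h | h <;> omega
  have φnostart_p2 : p + 2 < n → ¬ WordRunStart φ (p + 2) := by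
    intro hlt hs
    rcases hs with h | h
    · omega
    · rw [show p + 2 - 1 = p + 1 by omega, φval_p1, φval_t (p + 2) (by omega),
        show p + 2 - 2 = p by omega] at h
      have := hpc3 (by omega)
      omega
  have φstart_t : ∀ i, p + 3 ≤ i → i < n → (WordRunStart φ i ↔ WordRunStart w (i - 2)) := by
    intro i h3 hi
    unfold WordRunStart
    rw [φval_t i (by omega), φval_t (i - 1) (by omega),
      show i - 1 - 2 = i - 2 - 1 by omega]
    constructor
    · rintro (h | h)
      · omega
      · exact Or.inr h
    · rintro (h | h)
      · omega
      · exact Or.inr h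
  have φcases : ∀ i, i < n → WordRunStart φ i → i = 0 ∨ (1 ≤ i ∧ i < p ∧ WordRunStart w i) ∨
      i = p + 1 ∨ (p + 3 ≤ i ∧ WordRunStart w (i - 2)) := by
    intro i hi hs
    rcases lt_trichotomy i p with h | h | h
    · rcases Nat.eq_zero_or_pos i with h0 | h0
      · exact Or.inl h0
      · exact Or.inr (Or.inl ⟨h0, h, (φstart_lt i h).1 hs⟩)
    · subst h
      exact absurd hs φnostart_p
    · by_cases h2 : i = p + 1
      · exact Or.inr (Or.inr (Or.inl h2))
      · by_cases h3 : i = p + 2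
        · subst h3
          exact absurd hs (φnostart_p2 (by omega))
        · exact Or.inr (Or.inr (Or.inr ⟨by omega, (φstart_t i (by omega) hi).1 hs⟩))
  have φflat : WordFlattened φ n := by
    intro i hi j hj hsi hsj hij
    rcases φcases i hi hsi with h0 | ⟨h1, h2, h3⟩ | h4 | ⟨h5, h6⟩ <;>
      rcases φcases j hj hsj with g0 | ⟨g1, g2, g3⟩ | g4 | ⟨g5, g6⟩
    · omega
    · rw [h0, φval_lt 0 (by omega), w0, φval_lt j g2]
      have : w j ≠ 0 := by
        intro he
        have := winj j (by omega) 0 (by omega) (he.trans w0.symm)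
        omega
      omega
    · rw [h0, φval_lt 0 (by omega), w0, g4, φval_p1]
      omega
    · rw [h0, φval_lt 0 (by omega), w0, φval_t j (by omega)]
      have := hpc5 (j - 2) (by omega) (by omega) g6
      omega
    · omega
    · rw [φval_lt i h2, φval_lt j g2]
      exact wflat i (by omega) j (by omega) h3 g3 hij
    · rw [φval_lt i h2, g4, φval_p1]
      exact hpc4 i h2 (by omega) h3
    · rw [φval_lt i h2, φval_t j (by omega)]
      have ha := hpc4 i h2 (by omega) h3
      have hb' := hpc5 (j - 2) (by omega) (by omega) g6
      omega
    · omega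
    · omega
    · omega
    · rw [h4, φval_p1, φval_t j (by omega)]
      exact hpc5 (j - 2) (by omega) (by omega) g6
    · omega
    · omega
    · omega
    · rw [φval_t i (by omega), φval_t j (by omega)]
      exact wflat (i - 2) (by omega) (j - 2) (by omega) h6 g6 (by omega)
  have φruns : cnt φ 0 n = k := by
    have s1 : cnt φ 0 n =
        cnt φ 0 p + cnt φ p (p + 1) + cnt φ (p + 1) (p + 2) + cnt φ (p + 2) n := by
      rw [cnt_split (u := φ) (show (0:ℕ) ≤ p by omega) (show p ≤ n by omega),
        cnt_split (u := φ) (show p ≤ p + 1 by omega) (show p + 1 ≤ n by omega),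
        cnt_split (u := φ) (show p + 1 ≤ p + 2 by omega) (show p + 2 ≤ n by omega)]
      omega
    have c1 : cnt φ 0 p = cnt w 0 p := cnt_congr fun i _ hip => φstart_lt i hip
    have c2 : cnt φ p (p + 1) = 0 := by rw [cnt_singleton, if_neg φnostart_p]
    have c3 : cnt φ (p + 1) (p + 2) = 1 := by rw [cnt_singleton, if_pos φstart_p1]
    have c4 : cnt w p (n - 2) = cnt φ (p + 2) n := by
      have hsh := cnt_shift (u := w) (v := φ) (a := p) (b := n - 2) (d := 2)
        (by
          intro i hi1 hi2
          rcases Nat.eq_or_lt_of_le hi1 with he | hlt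
          · rw [← he]
            exact iff_of_false (wnostart_p (by omega)) (φnostart_p2 (by omega))
          · have h := φstart_t (i + 2) (by omega) (by omega)
            rw [show i + 2 - 2 = i by omega] at h
            exact h.symm)
      rw [hsh]
      congr 1
      omega
    have c5 : cnt w 0 (n - 2) = cnt w 0 p + cnt w p (n - 2) :=
      cnt_split (u := w) (by omega) (by omega)
    omega
  have e1 : entry σ0 (p + 1) = b := by rw [hentry (p + 1) (by omega), φval_p1]
  have e2' : entry σ0 (p - 1) = w (p - 1) := by
    rw [hentry (p - 1) (by omega), φval_lt (p - 1) (by omega)]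
  have hent' : ∀ j, j < n → φ j = entry σ0 j := fun j hj => (hentry j hj).symm
  have hrc : wordRuns (entry σ0) n = k := by
    rw [wordRuns_eq_cnt, ← cnt_of_eq hent' (le_refl n)]
    exact φruns
  have hmem : σ0 ∈ Lset n k := by
    simp only [Lset, flatSet, Finset.mem_filter, Finset.mem_univ, true_and]
    refine ⟨⟨wordFlattened_of_eq hent' φflat, hrc⟩, ?_⟩
    unfold delRuns
    have hdc := del_count σ0 hn (by rw [hdelpos]; omega) (by rw [hdelpos]; omega)
    rw [hdelpos] at hdc
    have hne : ¬ (entry σ0 (p + 1) < entry σ0 (p - 1)) := by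
      rw [e1, e2']
      omega
    rw [if_neg hne] at hdc
    omega
  refine ⟨σ0, hmem, ?_⟩
  intro i hi
  rcases Nat.eq_zero_or_pos i with h0 | h0
  · rw [h0, psiW_zero, e0]
  · by_cases h1 : i = 1
    · subst h1
      rw [psiW_one, hdelpos, e1]
      omega
    · rcases le_or_gt i (p + 1) with h2 | h2
      · rw [psiW_mid_val σ0 (by omega) (by rw [hdelpos]; omega),
          hentry (i - 2) (by omega), φval_lt (i - 2) (by omega)]
        have h3 := hw_add (i - 2) (by omega)
        rw [show i - 2 + 2 = i by omega] at h3
        exact h3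
      · rw [psiW_tail_val σ0 (by rw [hdelpos]; omega), hentry i hi, φval_t i (by omega)]
        have h3 := hw_add (i - 2) (by omega)
        rw [show i - 2 + 2 = i by omega] at h3
        exact h3

end Surj2

section Main

lemma psiPerm_mem {n k : ℕ} (hk : 2 ≤ k) (hkn : k < n) {σ : Equiv.Perm (Fin n)}
    (hσ : σ ∈ Lset n k) (h1 : 1 ≤ delPos σ) (h2 : delPos σ + 2 ≤ n) :
    mkPerm n (psiW σ) (psiW_lt σ h1 h2) (psiW_inj σ h1 h2) ∈ Cset n k := by
  obtain ⟨hF, hkc, hp1, hp2, hP3⟩ := L_mem_facts hk hkn hσ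
  have hent : ∀ i, i < n →
      psiW σ i = entry (mkPerm n (psiW σ) (psiW_lt σ h1 h2) (psiW_inj σ h1 h2)) i :=
    fun i hi => (entry_mkPerm n (psiW σ) _ _ hi).symm
  simp only [Cset, flatSet, Finset.mem_filter, Finset.mem_univ, true_and]
  simp only [IsRunStart]
  refine ⟨⟨?_, ?_⟩, ?_, ?_⟩
  · exact wordFlattened_of_eq hent (psi_flattened hF hp1 hp2 hP3)
  · show wordRuns _ n = k
    rw [wordRuns_eq_cnt, ← cnt_of_eq hent (le_refl n), psi_runs hF hp1 hp2 hP3,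
      ← wordRuns_eq_cnt]
    exact hkc
  · rintro ⟨-, hs⟩
    exact psi_not_start1 hF hp1 hp2
      ((wordRunStart_iff_of_eq hent (show 1 < n by omega)).2 hs)
  · exact ⟨by omega,
      (wordRunStart_iff_of_eq hent (show 2 < n by omega)).1 (psi_start2 hF hp1 hp2)⟩


/-- For all integers `n`, `k` with `2 ≤ k < n`, the sets `C_{n,k}` and `L_{n,k}` have the
same cardinality. -/
theorem card_Cset_eq_card_Lset (n k : ℕ) (hk : 2 ≤ k) (hkn : k < n) :
    (Cset n k).card = (Lset n k).card := by
  symm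
  refine Finset.card_bij
    (fun σ hσ => mkPerm n (psiW σ)
      (psiW_lt σ (L_mem_facts hk hkn hσ).2.2.1 (L_mem_facts hk hkn hσ).2.2.2.1)
      (psiW_inj σ (L_mem_facts hk hkn hσ).2.2.1 (L_mem_facts hk hkn hσ).2.2.2.1))
    ?_ ?_ ?_
  · intro σ hσ
    exact psiPerm_mem hk hkn hσ (L_mem_facts hk hkn hσ).2.2.1 (L_mem_facts hk hkn hσ).2.2.2.1
  · intro σ1 h1 σ2 h2 heq
    have F1 := L_mem_facts hk hkn h1
    have F2 := L_mem_facts hk hkn h2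
    have heq' : mkPerm n (psiW σ1) (psiW_lt σ1 F1.2.2.1 F1.2.2.2.1)
          (psiW_inj σ1 F1.2.2.1 F1.2.2.2.1)
        = mkPerm n (psiW σ2) (psiW_lt σ2 F2.2.2.1 F2.2.2.2.1)
          (psiW_inj σ2 F2.2.2.1 F2.2.2.2.1) := heq
    have hw : ∀ i < n, psiW σ1 i = psiW σ2 i := by
      intro i hi
      have hc := congrArg (fun π : Equiv.Perm (Fin n) => entry π i) heq'
      rw [entry_mkPerm n (psiW σ1) _ _ hi, entry_mkPerm n (psiW σ2) _ _ hi] at hc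
      exact hc
    rcases lt_trichotomy (delPos σ1) (delPos σ2) with h | h | h
    · exact (psi_inj_aux F1.1 F1.2.2.1 F1.2.2.2.1 F2.2.2.1 F2.2.2.2.1 F2.2.2.2.2 hw h).elim
    · exact psi_word_eq_of_delPos_eq F1.2.2.1 F1.2.2.2.1 hw h
    · exact (psi_inj_aux F2.1 F2.2.2.1 F2.2.2.2.1 F1.2.2.1 F1.2.2.2.1 F1.2.2.2.2
        (fun i hi => (hw i hi).symm) h).elim
  · intro τ hτ
    obtain ⟨σ, hσ, hws⟩ := surj_aux hk hkn hτ
    refine ⟨σ, hσ, ?_⟩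
    apply perm_ext
    intro i hi
    rw [entry_mkPerm n (psiW σ) _ _ hi]
    exact hws i hi


end Main
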